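/- For vectors x, y ∈ ℝ^n with all entries strictly positive, if y weakly supermajorizes x (i.e., writing both in non-decreasing order, the partial sums ∑_{i=1}^k y_i ≤ ∑_{i=1}^k x_i for all 1 ≤ k ≤ n) and x is not a permutation of y, then ∑_{i=1}^n log(y_i) < ∑_{i=1}^n log(x_i). -/

import Mathlib

/-- Abel-summation bound: if `c` is nonincreasing on `range n`, bounded below by
`c0 ≥ 0`, and all nonempty partial sums of `d` up to `n` are nonpositive, then
`∑ cᵢ dᵢ ≤ c0 * ∑ dᵢ`. -/
lemma abel_aux (c d : ℕ → ℝ) :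
    ∀ n (c0 : ℝ), 0 ≤ c0 → (∀ i, i < n → c0 ≤ c i) →
    (∀ i j, i ≤ j → j < n → c j ≤ c i) →
    (∀ k, 1 ≤ k → k ≤ n → ∑ i ∈ Finset.range k, d i ≤ 0) →
    ∑ i ∈ Finset.range n, c i * d i ≤ c0 * ∑ i ∈ Finset.range n, d i := by
  intro n
  induction n with
  | zero => simp
  | succ n ih =>
    intro c0 hc0 hle hanti hT
    have hcn : c0 ≤ c n := hle n (Nat.lt_succ_self n)
    have h1 : ∑ i ∈ Finset.range n, c i * d i ≤ c n * ∑ i ∈ Finset.range n, d i :=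
      ih (c n) (le_trans hc0 hcn)
        (fun i hi => hanti i n (Nat.le_of_lt hi) (Nat.lt_succ_self n))
        (fun i j hij hj => hanti i j hij (Nat.lt_succ_of_lt hj))
        (fun k hk1 hk2 => hT k hk1 (Nat.le_succ_of_le hk2))
    have hTsucc : ∑ i ∈ Finset.range (n + 1), d i ≤ 0 :=
      hT (n + 1) (Nat.succ_le_succ (Nat.zero_le n)) (le_refl _)
    calc ∑ i ∈ Finset.range (n + 1), c i * d i
        = ∑ i ∈ Finset.range n, c i * d i + c n * d n := Finset.sum_range_succ _ n
      _ ≤ c n * ∑ i ∈ Finset.range n, d i + c n * d n := by linarith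
      _ = c n * ∑ i ∈ Finset.range (n + 1), d i := by rw [Finset.sum_range_succ]; ring
      _ ≤ c0 * ∑ i ∈ Finset.range (n + 1), d i := mul_le_mul_of_nonpos_right hcn hTsucc

/-- Sum over `Finset.Iic i` in `Fin n` equals a sum over `range (i + 1)`. -/
lemma sum_Iic_fin {n : ℕ} (f : Fin n → ℝ) (i : Fin n) (F : ℕ → ℝ)
    (hF : ∀ j : Fin n, F j.val = f j) :
    ∑ j ∈ Finset.Iic i, f j = ∑ k ∈ Finset.range (i.val + 1), F k := by
  refine Finset.sum_bij' (fun j _ => (j : Fin n).val)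
    (fun k hk => (⟨k, lt_of_lt_of_le (Finset.mem_range.1 hk) (Nat.succ_le_of_lt i.isLt)⟩ : Fin n))
    ?_ ?_ ?_ ?_ ?_
  · intro a ha
    simpa [Finset.mem_range, Nat.lt_succ_iff] using (Finset.mem_Iic.1 ha : a ≤ i)
  · intro a ha
    simpa [Finset.mem_Iic, Fin.le_def, Nat.lt_succ_iff] using Finset.mem_range.1 ha
  · intro a ha; rfl
  · intro a ha; rfl
  · intro a ha; exact (hF a).symm

/-- Lemma 6 (log-sum under weak supermajorization): for strictly positive vectors
`x, y ∈ ℝⁿ` written in non-decreasing order, if `y` weakly supermajorizes `x`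
(all partial sums of `y` are at most the corresponding partial sums of `x`)
and `x` is not a permutation of `y`, then `∑ log yᵢ < ∑ log xᵢ`. -/
theorem log_sum_lt_of_weak_supermajorize {n : ℕ} (x y : Fin n → ℝ)
    (hxpos : ∀ i, 0 < x i) (hypos : ∀ i, 0 < y i)
    (hxmono : Monotone x) (hymono : Monotone y)
    (hsuper : ∀ i : Fin n, ∑ j ∈ Finset.Iic i, y j ≤ ∑ j ∈ Finset.Iic i, x j)
    (hnoperm : ¬ ∃ e : Equiv.Perm (Fin n), x = y ∘ e) :
    ∑ i, Real.log (y i) < ∑ i, Real.log (x i) := by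
  -- `x ≠ y`, otherwise take the identity permutation.
  have hne : ∃ i0 : Fin n, x i0 ≠ y i0 := by
    by_contra h
    push_neg at h
    exact hnoperm ⟨Equiv.refl _, funext fun i => h i⟩
  obtain ⟨i0, hi0⟩ := hne
  -- pointwise bounds: log yᵢ - log xᵢ ≤ (xᵢ)⁻¹ * (yᵢ - xᵢ), strict at i0.
  have hpt : ∀ i : Fin n, Real.log (y i) - Real.log (x i) ≤ (x i)⁻¹ * (y i - x i) := by
    intro i
    have h1 : Real.log (y i / x i) ≤ y i / x i - 1 :=
      Real.log_le_sub_one_of_pos (div_pos (hypos i) (hxpos i))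
    rw [Real.log_div (ne_of_gt (hypos i)) (ne_of_gt (hxpos i))] at h1
    have h2 : (x i)⁻¹ * (y i - x i) = y i / x i - 1 := by
      rw [mul_sub, inv_mul_cancel₀ (ne_of_gt (hxpos i)), inv_mul_eq_div]
    linarith
  have hpt0 : Real.log (y i0) - Real.log (x i0) < (x i0)⁻¹ * (y i0 - x i0) := by
    have hne1 : y i0 / x i0 ≠ 1 := by
      intro h
      exact hi0 ((div_eq_one_iff_eq (ne_of_gt (hxpos i0))).1 h).symm
    have h1 : Real.log (y i0 / x i0) < y i0 / x i0 - 1 :=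
      Real.log_lt_sub_one_of_pos (div_pos (hypos i0) (hxpos i0)) hne1
    rw [Real.log_div (ne_of_gt (hypos i0)) (ne_of_gt (hxpos i0))] at h1
    have h2 : (x i0)⁻¹ * (y i0 - x i0) = y i0 / x i0 - 1 := by
      rw [mul_sub, inv_mul_cancel₀ (ne_of_gt (hxpos i0)), inv_mul_eq_div]
    linarith
  -- the weighted sum of differences is nonpositive, by Abel summation.
  set C : ℕ → ℝ := fun k => if h : k < n then (x ⟨k, h⟩)⁻¹ else 0 with hC
  set D : ℕ → ℝ := fun k => if h : k < n then y ⟨k, h⟩ - x ⟨k, h⟩ else 0 with hD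
  have hCval : ∀ j : Fin n, C j.val = (x j)⁻¹ := fun j => by simp [hC, j.isLt]
  have hDval : ∀ j : Fin n, D j.val = y j - x j := fun j => by simp [hD, j.isLt]
  have habel : ∑ i : Fin n, (x i)⁻¹ * (y i - x i) ≤ 0 := by
    have heq : ∑ i : Fin n, (x i)⁻¹ * (y i - x i)
        = ∑ k ∈ Finset.range n, C k * D k := by
      rw [Finset.sum_range fun k => C k * D k]
      exact Finset.sum_congr rfl fun i _ => by rw [hCval, hDval]
    rw [heq]
    have h0 := abel_aux C D n 0 (le_refl 0)
      (fun i hi => by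
        rw [show C i = (x ⟨i, hi⟩)⁻¹ from by simp [hC, hi]]
        exact le_of_lt (inv_pos.2 (hxpos ⟨i, hi⟩)))
      (fun i j hij hj => by
        have hi : i < n := lt_of_le_of_lt hij hj
        rw [show C i = (x ⟨i, hi⟩)⁻¹ from by simp [hC, hi],
            show C j = (x ⟨j, hj⟩)⁻¹ from by simp [hC, hj]]
        exact inv_anti₀ (hxpos ⟨i, hi⟩) (hxmono (show (⟨i, hi⟩ : Fin n) ≤ ⟨j, hj⟩ from hij)))
      (fun k hk1 hk2 => by
        have hk : k - 1 < n := lt_of_lt_of_le (Nat.pred_lt (Nat.one_le_iff_ne_zero.1 hk1)) hk2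
        have hkk : k - 1 + 1 = k := Nat.succ_pred_eq_of_pos hk1
        have := sub_nonpos.2 (hsuper ⟨k - 1, hk⟩)
        rw [show ∑ j ∈ Finset.Iic (⟨k - 1, hk⟩ : Fin n), y j
              - ∑ j ∈ Finset.Iic (⟨k - 1, hk⟩ : Fin n), x j
            = ∑ j ∈ Finset.Iic (⟨k - 1, hk⟩ : Fin n), (y j - x j) from
          (Finset.sum_sub_distrib _ _).symm] at this
        rw [sum_Iic_fin (fun j => y j - x j) ⟨k - 1, hk⟩ D hDval] at this
        simpa [hkk] using this)
    simpa using h0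
  -- combine: strict sum inequality.
  have hsum : ∑ i : Fin n, (Real.log (y i) - Real.log (x i))
      < ∑ i : Fin n, (x i)⁻¹ * (y i - x i) := by
    apply Finset.sum_lt_sum (fun i _ => hpt i) ⟨i0, Finset.mem_univ i0, hpt0⟩
  rw [Finset.sum_sub_distrib] at hsum
  linarith
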